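/- Let m, n be positive integers, p = min{m,n}, and let K ⊆ ℝᵖ be a convex compact set contained in the nonnegative orthant and invariant under coordinate permutations. Let x* ∈ ℝ^{m×n} have a singular value decomposition x* = U* diag(σ*) V*ᵀ with U*ᵀU* = I, V*ᵀV* = I, σ* ∈ K, and σ* having at most s nonzero entries. Let z ∈ ℝ^{m×n} have a singular value decomposition z = U_z diag(σ_z) V_zᵀ with U_zᵀU_z = I, V_zᵀV_z = I and σ_z nonnegative and sorted in nonincreasing order. Let T = {1,…,s} (indices of the s largest entries of σ_z), let σ' be a minimizer of ‖τ − σ_z‖ over {τ ∈ K : τ_j = 0 for all j ∉ T}, and set z' = U_z diag(σ') V_zᵀ. Then ‖z' − z‖_F ≤ ‖x* − z‖_F, where ‖·‖_F is the Frobenius norm. -/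

import Mathlib

open Matrix Finset

/-- The `m × n` "diagonal" matrix with the vector `σ ∈ ℝ^{min m n}` on its main diagonal. -/
noncomputable def diagMN (m n : ℕ) (σ : Fin (min m n) → ℝ) : Matrix (Fin m) (Fin n) ℝ :=
  fun i j => if h : (i : ℕ) = (j : ℕ) ∧ (i : ℕ) < min m n then σ ⟨(i : ℕ), h.2⟩ else 0

/-- The Frobenius norm of a real `m × n` matrix. -/
noncomputable def frobNorm {m n : ℕ} (A : Matrix (Fin m) (Fin n) ℝ) : ℝ :=
  Real.sqrt (∑ i, ∑ j, (A i j) ^ 2)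

/-- Lemma `wpoMatImp`, spectral version of the greedy sparse projection:
if `x* = U* diag(σ*) V*ᵀ` with `σ* ∈ K` having at most `s` nonzeros, and `σ'` is the
restricted projection of the (sorted) singular values `σ_z` of `z` onto the top-`s`
coordinates of `K`, then `‖U_z diag(σ') V_zᵀ − z‖_F ≤ ‖x* − z‖_F`. -/
lemma weight_lemma (p K : ℕ) (hK : K ≤ p) (hK0 : 0 < K) (τ a : ℕ → ℝ)
    (hτ0 : ∀ l, 0 ≤ τ l) (hτm : ∀ k l, k ≤ l → τ l ≤ τ k)
    (ha0 : ∀ l, 0 ≤ a l) (ha1 : ∀ l, a l ≤ 1)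
    (hasum : ∑ l ∈ range p, a l ≤ K) :
    ∑ l ∈ range p, τ l * a l ≤ ∑ l ∈ range K, τ l := by
  have hrw : ∑ l ∈ range K, τ l = ∑ l ∈ range p, (if l < K then τ l else 0) := by
    rw [← Finset.sum_filter]
    congr 1
    ext x; simp only [Finset.mem_filter, Finset.mem_range]; omega
  have key : ∀ l ∈ range p,
      τ l * a l - (if l < K then τ l else 0) ≤ τ (K-1) * (a l - if l < K then 1 else 0) := by
    intro l _
    by_cases h : l < K
    · simp only [if_pos h]
      have h1 : τ (K-1) ≤ τ l := hτm l (K-1) (by omega)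
      nlinarith [ha1 l, ha0 l]
    · simp only [if_neg h]
      have h1 : τ l ≤ τ (K-1) := hτm (K-1) l (by omega)
      nlinarith [ha0 l]
  have hsum := Finset.sum_le_sum key
  have hones : ∑ l ∈ range p, (if l < K then (1:ℝ) else 0) = K := by
    rw [← Finset.sum_filter]
    have : (range p).filter (· < K) = range K := by ext x; simp; omega
    simp [this]
  have hre : ∑ l ∈ range p, τ (K-1) * (a l - if l < K then 1 else 0)
      = τ (K-1) * (∑ l ∈ range p, a l - K) := by
    rw [← Finset.mul_sum, Finset.sum_sub_distrib, hones]
  have hlast : τ (K-1) * (∑ l ∈ range p, a l - K) ≤ 0 := by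
    have h0 : (0:ℝ) ≤ τ (K-1) := hτ0 _
    nlinarith [hasum]
  rw [Finset.sum_sub_distrib, hre] at hsum
  rw [hrw]; linarith

/-- Abel-type rearrangement: `∑ f k σ k = ∑_j (σ j - σ (j+1)) ∑_{k ≤ j} f k` when `σ p = 0`. -/
lemma abel_rearrange (p : ℕ) (f σ : ℕ → ℝ) (hσp : σ p = 0) :
    ∑ k ∈ range p, f k * σ k
      = ∑ j ∈ range p, (σ j - σ (j+1)) * ∑ k ∈ range (j+1), f k := by
  have step : ∀ j ∈ range p, (σ j - σ (j+1)) * ∑ k ∈ range (j+1), f k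
      = ∑ k ∈ range p, (if k ≤ j then (σ j - σ (j+1)) * f k else 0) := by
    intro j hj
    rw [Finset.mul_sum, ← Finset.sum_filter]
    have : (range p).filter (· ≤ j) = range (j+1) := by
      ext x; simp only [Finset.mem_filter, Finset.mem_range]
      have := Finset.mem_range.1 hj
      exact ⟨fun h => by omega, fun h => by omega⟩
    rw [this]
  rw [Finset.sum_congr rfl step, Finset.sum_comm]
  refine Finset.sum_congr rfl fun k hk => ?_
  have hkp : k < p := Finset.mem_range.1 hk
  have : ∑ j ∈ range p, (if k ≤ j then (σ j - σ (j+1)) * f k else 0)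
      = ∑ j ∈ Ico k p, (σ j - σ (j+1)) * f k := by
    rw [← Finset.sum_filter]
    congr 1
    ext x; simp only [Finset.mem_filter, Finset.mem_range, Finset.mem_Ico]; omega
  rw [this, ← Finset.sum_mul]
  have : ∑ j ∈ Ico k p, (σ j - σ (j+1)) = σ k - σ p := by
    rw [Finset.sum_Ico_eq_sub _ hkp.le, Finset.sum_range_sub' σ, Finset.sum_range_sub' σ]
    ring
  rw [this, hσp]; ring
/-- Core trace-type inequality. -/
lemma core_ineq (p : ℕ) (τ σ : ℕ → ℝ) (e : ℕ → ℕ → ℝ)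
    (hτ0 : ∀ l, 0 ≤ τ l) (hτm : ∀ k l, k ≤ l → τ l ≤ τ k)
    (hσm : ∀ k l, k ≤ l → σ l ≤ σ k) (hσp : σ p = 0)
    (hC1 : ∀ l j, j < p → |∑ k ∈ range (j+1), e l k| ≤ 1)
    (hCsum : ∀ j, j < p → ∑ l ∈ range p, |∑ k ∈ range (j+1), e l k| ≤ (j+1 : ℕ)) :
    ∑ k ∈ range p, (∑ l ∈ range p, τ l * e l k) * σ k
      ≤ ∑ k ∈ range p, τ k * σ k := by
  rw [abel_rearrange p _ σ hσp, abel_rearrange p τ σ hσp]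
  refine Finset.sum_le_sum fun j hj => ?_
  have hjp := Finset.mem_range.1 hj
  have hd : 0 ≤ σ j - σ (j+1) := sub_nonneg.2 (hσm j (j+1) (by omega))
  refine mul_le_mul_of_nonneg_left ?_ hd
  -- ∑_{k ≤ j} ∑_l τ l * e l k ≤ ∑_{k ≤ j} τ k
  rw [Finset.sum_comm]
  calc ∑ l ∈ range p, ∑ k ∈ range (j+1), τ l * e l k
      = ∑ l ∈ range p, τ l * ∑ k ∈ range (j+1), e l k := by
        refine Finset.sum_congr rfl fun l _ => ?_; rw [Finset.mul_sum]
    _ ≤ ∑ l ∈ range p, τ l * |∑ k ∈ range (j+1), e l k| := by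
        refine Finset.sum_le_sum fun l _ => ?_
        exact mul_le_mul_of_nonneg_left (le_abs_self _) (hτ0 l)
    _ ≤ ∑ k ∈ range (j+1), τ k := by
        refine weight_lemma p (j+1) (by omega) (by omega) τ _ hτ0 hτm
          (fun l => abs_nonneg _) (fun l => hC1 l j hjp) ?_
        exact_mod_cast hCsum j hjp


noncomputable def frobSq {m n : ℕ} (A : Matrix (Fin m) (Fin n) ℝ) : ℝ :=
  ∑ i, ∑ j, (A i j) ^ 2

lemma frobSq_nonneg {m n : ℕ} (A : Matrix (Fin m) (Fin n) ℝ) : 0 ≤ frobSq A :=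
  Finset.sum_nonneg fun _ _ => Finset.sum_nonneg fun _ _ => sq_nonneg _

lemma frobSq_eq_trace {m n : ℕ} (A : Matrix (Fin m) (Fin n) ℝ) :
    frobSq A = Matrix.trace (Aᵀ * A) := by
  unfold frobSq Matrix.trace
  rw [Finset.sum_comm]
  refine Finset.sum_congr rfl fun j _ => ?_
  simp [Matrix.mul_apply, Matrix.diag, sq]

lemma frobSq_mul_left {m n : ℕ} (U : Matrix (Fin m) (Fin m) ℝ) (B : Matrix (Fin m) (Fin n) ℝ)
    (hU : Uᵀ * U = 1) : frobSq (U * B) = frobSq B := by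
  rw [frobSq_eq_trace, frobSq_eq_trace, Matrix.transpose_mul]
  simp only [Matrix.mul_assoc, ← Matrix.mul_assoc Uᵀ U, hU, Matrix.one_mul]

lemma frobSq_mul_right {m n : ℕ} (B : Matrix (Fin m) (Fin n) ℝ) (V : Matrix (Fin n) (Fin n) ℝ)
    (hV : Vᵀ * V = 1) : frobSq (B * Vᵀ) = frobSq B := by
  rw [frobSq_eq_trace, frobSq_eq_trace]
  calc Matrix.trace ((B * Vᵀ)ᵀ * (B * Vᵀ))
      = Matrix.trace (V * (Bᵀ * (B * Vᵀ))) := by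
        rw [Matrix.transpose_mul, Matrix.transpose_transpose, Matrix.mul_assoc]
    _ = Matrix.trace ((Bᵀ * (B * Vᵀ)) * V) := Matrix.trace_mul_comm _ _
    _ = Matrix.trace (Bᵀ * B) := by
        rw [Matrix.mul_assoc, Matrix.mul_assoc, hV, Matrix.mul_one]

/-- Reindex a dite-sum over `Fin N` restricted below `p` as a sum over `Fin p`. -/
lemma sum_univ_dite {N p : ℕ} (hp : p ≤ N) (F : Fin p → ℝ) :
    ∑ a : Fin N, (if h : (a:ℕ) < p then F ⟨a, h⟩ else 0) = ∑ k : Fin p, F k := by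
  rw [Fin.sum_univ_eq_sum_range (fun t => if h : t < p then F ⟨t, h⟩ else 0) N]
  have h2 : ∑ k : Fin p, F k
      = ∑ i ∈ range p, (fun t => if h : t < p then F ⟨t, h⟩ else 0) i := by
    rw [← Fin.sum_univ_eq_sum_range]
    exact Finset.sum_congr rfl fun k _ => by simp [Fin.eta]
  rw [h2, Finset.sum_subset (Finset.range_subset_range.2 hp)]
  intro x _ hx
  exact dif_neg (by simpa using hx)

variable {m n : ℕ}

/-- Embeddings of `Fin (min m n)`. -/
def emb (m n : ℕ) : Fin (min m n) → Fin m := Fin.castLE (min_le_left m n)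
def enb (m n : ℕ) : Fin (min m n) → Fin n := Fin.castLE (min_le_right m n)

lemma sum_mul_diag (B : Matrix (Fin m) (Fin n) ℝ) (σ : Fin (min m n) → ℝ) :
    ∑ i, ∑ j, B i j * diagMN m n σ i j
      = ∑ k : Fin (min m n), B (emb m n k) (enb m n k) * σ k := by
  have inner : ∀ i : Fin m, ∑ j, B i j * diagMN m n σ i j
      = if h : (i:ℕ) < min m n then
          B (emb m n ⟨i, h⟩) (enb m n ⟨i, h⟩) * σ ⟨i, h⟩ else 0 := by
    intro i
    by_cases h : (i:ℕ) < min m n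
    · rw [dif_pos h]
      rw [Finset.sum_eq_single (enb m n ⟨i, h⟩)]
      · show B i _ * diagMN m n σ i _ = _
        have hie : emb m n ⟨(i:ℕ), h⟩ = i := rfl
        unfold diagMN
        rw [dif_pos (⟨rfl, h⟩ : (i:ℕ) = ((enb m n ⟨(i:ℕ), h⟩ : Fin n)) ∧ (i:ℕ) < min m n), hie]
      · intro j _ hj
        unfold diagMN
        rw [dif_neg, mul_zero]
        rintro ⟨h1, h2⟩
        exact hj (Fin.ext h1.symm)
      · intro hmem; exact absurd (Finset.mem_univ _) hmem
    · rw [dif_neg h]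
      refine Finset.sum_eq_zero fun j _ => ?_
      unfold diagMN
      rw [dif_neg, mul_zero]
      rintro ⟨h1, h2⟩; exact h h2
  rw [Finset.sum_congr rfl fun i _ => inner i]
  exact sum_univ_dite (min_le_left m n) (fun k => B (emb m n k) (enb m n k) * σ k)

lemma frobSq_diagMN (σ : Fin (min m n) → ℝ) :
    frobSq (diagMN m n σ) = ∑ k, (σ k)^2 := by
  unfold frobSq
  simp only [sq]
  rw [sum_mul_diag (diagMN m n σ) σ]
  refine Finset.sum_congr rfl fun k _ => ?_
  have : diagMN m n σ (emb m n k) (enb m n k) = σ k := by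
    unfold diagMN
    rw [dif_pos ⟨rfl, k.isLt⟩]
    congr 1
  rw [this]

lemma triple_apply (P : Matrix (Fin m) (Fin m) ℝ) (Q : Matrix (Fin n) (Fin n) ℝ)
    (σ : Fin (min m n) → ℝ) (i : Fin m) (j : Fin n) :
    (P * diagMN m n σ * Qᵀ) i j
      = ∑ k : Fin (min m n), σ k * P i (emb m n k) * Q j (enb m n k) := by
  rw [Matrix.mul_apply]
  have step : ∀ b : Fin n, (P * diagMN m n σ) i b
      = if h : (b:ℕ) < min m n then P i (emb m n ⟨b, h⟩) * σ ⟨b, h⟩ else 0 := by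
    intro b
    rw [Matrix.mul_apply]
    by_cases h : (b:ℕ) < min m n
    · rw [dif_pos h]
      rw [Finset.sum_eq_single (emb m n ⟨b, h⟩)]
      · congr 1
        unfold diagMN
        exact dif_pos ⟨rfl, h⟩
      · intro a _ ha
        unfold diagMN
        rw [dif_neg, mul_zero]
        rintro ⟨h1, h2⟩
        exact ha (Fin.ext h1)
      · intro hmem; exact absurd (Finset.mem_univ _) hmem
    · rw [dif_neg h]
      refine Finset.sum_eq_zero fun a _ => ?_
      unfold diagMN
      rw [dif_neg, mul_zero]
      rintro ⟨h1, h2⟩; exact h (h1 ▸ h2)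
  calc ∑ b, (P * diagMN m n σ) i b * Qᵀ b j
      = ∑ b : Fin n, (if h : (b:ℕ) < min m n then
          σ ⟨b, h⟩ * P i (emb m n ⟨b, h⟩) * Q j (enb m n ⟨b, h⟩) else 0) := by
        refine Finset.sum_congr rfl fun b _ => ?_
        rw [step b, Matrix.transpose_apply]
        by_cases h : (b:ℕ) < min m n
        · rw [dif_pos h, dif_pos h]
          have : enb m n ⟨(b:ℕ), h⟩ = b := rfl
          rw [this]; ring
        · rw [dif_neg h, dif_neg h, zero_mul]
    _ = _ := sum_univ_dite (min_le_right m n)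
          (fun k => σ k * P i (emb m n k) * Q j (enb m n k))

lemma fin_sum_eq {p : ℕ} (G : Fin p → ℝ) (g : ℕ → ℝ)
    (h : ∀ t (ht : t < p), g t = G ⟨t, ht⟩) :
    ∑ k : Fin p, G k = ∑ t ∈ range p, g t := by
  rw [← Fin.sum_univ_eq_sum_range g p]
  exact Finset.sum_congr rfl fun k _ => (h k.1 k.2).symm

lemma col_norm {N : ℕ} (P : Matrix (Fin N) (Fin N) ℝ) (hP : Pᵀ * P = 1) (a : Fin N) :
    ∑ i, (P i a)^2 = 1 := by
  have := congrFun (congrFun hP a) a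
  rw [Matrix.mul_apply] at this
  simp only [Matrix.transpose_apply, Matrix.one_apply_eq] at this
  rw [← this]
  exact Finset.sum_congr rfl fun i _ => (sq (P i a)).symm ▸ by ring

lemma sum_sq_comp_le {N p : ℕ} (f : Fin p → Fin N) (hf : Function.Injective f)
    (x : Fin N → ℝ) : ∑ k, (x (f k))^2 ≤ ∑ i, (x i)^2 := by
  rw [← Finset.sum_image (f := fun i => (x i)^2) (g := f)
    (fun a _ b _ hab => hf hab)]
  exact Finset.sum_le_sum_of_subset_of_nonneg (Finset.subset_univ _)
    (fun i _ _ => sq_nonneg _)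

lemma trace_ineq {m n : ℕ} (P : Matrix (Fin m) (Fin m) ℝ) (Q : Matrix (Fin n) (Fin n) ℝ)
    (hP : Pᵀ * P = 1) (hP' : P * Pᵀ = 1) (hQ : Qᵀ * Q = 1) (hQ' : Q * Qᵀ = 1)
    (σs : Fin (min m n) → ℝ) (π : Equiv.Perm (Fin (min m n)))
    (hτ0 : ∀ k, 0 ≤ σs k)
    (hτm : ∀ i j : Fin (min m n), i ≤ j → σs (π j) ≤ σs (π i))
    (σz : Fin (min m n) → ℝ) (hσ0 : ∀ k, 0 ≤ σz k)
    (hσm : ∀ i j : Fin (min m n), i ≤ j → σz j ≤ σz i) :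
    ∑ k : Fin (min m n), (P * diagMN m n σs * Qᵀ) (emb m n k) (enb m n k) * σz k
      ≤ ∑ k : Fin (min m n), σs (π k) * σz k := by
  set τh : ℕ → ℝ := fun t => if h : t < (min m n) then σs (π ⟨t, h⟩) else 0 with hτh
  set σh : ℕ → ℝ := fun t => if h : t < (min m n) then σz ⟨t, h⟩ else 0 with hσh
  set eh : ℕ → ℕ → ℝ := fun l k =>
    if h : l < (min m n) ∧ k < (min m n) then
      P (emb m n ⟨k, h.2⟩) (emb m n (π ⟨l, h.1⟩)) * Q (enb m n ⟨k, h.2⟩) (enb m n (π ⟨l, h.1⟩))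
    else 0 with heh
  -- the entries of A on the diagonal
  have hA : ∀ k : Fin (min m n), (P * diagMN m n σs * Qᵀ) (emb m n k) (enb m n k)
      = ∑ l ∈ range (min m n), τh l * eh l (k : ℕ) := by
    intro k
    rw [triple_apply]
    rw [← Equiv.sum_comp π (fun l => σs l * P (emb m n k) (emb m n l) * Q (enb m n k) (enb m n l))]
    refine fin_sum_eq _ _ fun t ht => ?_
    simp only [hτh, heh]
    rw [dif_pos ht, dif_pos ⟨ht, k.2⟩]
    have h1 : emb m n ⟨(k:ℕ), k.2⟩ = emb m n k := rfl
    have h2 : enb m n ⟨(k:ℕ), k.2⟩ = enb m n k := rfl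
    rw [h1, h2]; ring
  have hC1 : ∀ l j, j < (min m n) → |∑ k ∈ range (j+1), eh l k| ≤ 1 := by
    intro l j hj
    by_cases hl : l < (min m n)
    · set x : ℕ → ℝ := fun k => if h : k < m then P ⟨k, h⟩ (emb m n (π ⟨l, hl⟩)) else 0 with hx
      set y : ℕ → ℝ := fun k => if h : k < n then Q ⟨k, h⟩ (enb m n (π ⟨l, hl⟩)) else 0 with hy
      have hrw : ∀ k ∈ range (j+1), eh l k = x k * y k := by
        intro k hk
        have hkp : k < (min m n) := by have := Finset.mem_range.1 hk; omega
        simp only [heh, hx, hy]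
        rw [dif_pos ⟨hl, hkp⟩, dif_pos (lt_of_lt_of_le hkp (min_le_left m n)),
          dif_pos (lt_of_lt_of_le hkp (min_le_right m n))]
        rfl
      rw [Finset.sum_congr rfl hrw]
      have hxs : ∑ k ∈ range (j+1), (x k)^2 ≤ 1 := by
        calc ∑ k ∈ range (j+1), (x k)^2 ≤ ∑ k ∈ range m, (x k)^2 :=
              Finset.sum_le_sum_of_subset_of_nonneg
                (Finset.range_subset_range.2 (by omega)) (fun _ _ _ => sq_nonneg _)
          _ = ∑ i : Fin m, (P i (emb m n (π ⟨l, hl⟩)))^2 := by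
              rw [← Fin.sum_univ_eq_sum_range (fun k => (x k)^2) m]
              exact Finset.sum_congr rfl fun i _ => by simp only [hx]; rw [dif_pos i.2]
          _ = 1 := col_norm P hP _
      have hys : ∑ k ∈ range (j+1), (y k)^2 ≤ 1 := by
        calc ∑ k ∈ range (j+1), (y k)^2 ≤ ∑ k ∈ range n, (y k)^2 :=
              Finset.sum_le_sum_of_subset_of_nonneg
                (Finset.range_subset_range.2 (by omega)) (fun _ _ _ => sq_nonneg _)
          _ = ∑ i : Fin n, (Q i (enb m n (π ⟨l, hl⟩)))^2 := by
              rw [← Fin.sum_univ_eq_sum_range (fun k => (y k)^2) n]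
              exact Finset.sum_congr rfl fun i _ => by simp only [hy]; rw [dif_pos i.2]
          _ = 1 := col_norm Q hQ _
      have hcs := Finset.sum_mul_sq_le_sq_mul_sq (range (j+1)) x y
      have hx0 : (0:ℝ) ≤ ∑ k ∈ range (j+1), (x k)^2 :=
        Finset.sum_nonneg fun _ _ => sq_nonneg _
      have hy0 : (0:ℝ) ≤ ∑ k ∈ range (j+1), (y k)^2 :=
        Finset.sum_nonneg fun _ _ => sq_nonneg _
      have h1 : (∑ k ∈ range (j+1), x k * y k)^2 ≤ 1 := by nlinarith
      nlinarith [abs_nonneg (∑ k ∈ range (j+1), x k * y k),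
        sq_abs (∑ k ∈ range (j+1), x k * y k)]
    · have : ∀ k ∈ range (j+1), eh l k = 0 := by
        intro k _; simp only [heh]; rw [dif_neg (by tauto)]
      rw [Finset.sum_congr rfl this]
      simp
  have row_norm_P : ∀ i : Fin m, ∑ a, (P i a)^2 = 1 := fun i => by
    have := col_norm Pᵀ (by rwa [Matrix.transpose_transpose]) i
    simpa [Matrix.transpose_apply] using this
  have row_norm_Q : ∀ i : Fin n, ∑ a, (Q i a)^2 = 1 := fun i => by
    have := col_norm Qᵀ (by rwa [Matrix.transpose_transpose]) i
    simpa [Matrix.transpose_apply] using this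
  set X : ℕ → ℕ → ℝ := fun l k =>
    if h : l < (min m n) ∧ k < (min m n) then (P (emb m n ⟨k, h.2⟩) (emb m n (π ⟨l, h.1⟩)))^2 else 0 with hX
  set Y : ℕ → ℕ → ℝ := fun l k =>
    if h : l < (min m n) ∧ k < (min m n) then (Q (enb m n ⟨k, h.2⟩) (enb m n (π ⟨l, h.1⟩)))^2 else 0 with hY
  have hembinj : Function.Injective (fun l : Fin (min m n) => emb m n (π l)) := by
    intro a b hab
    exact π.injective (Fin.castLE_injective _ hab)
  have henbinj : Function.Injective (fun l : Fin (min m n) => enb m n (π l)) := by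
    intro a b hab
    exact π.injective (Fin.castLE_injective _ hab)
  have hXsum : ∀ k, k < (min m n) → ∑ l ∈ range (min m n), X l k ≤ 1 := by
    intro k hk
    have : ∑ l ∈ range (min m n), X l k
        = ∑ l : Fin (min m n), (P (emb m n ⟨k, hk⟩) (emb m n (π l)))^2 := by
      refine (fin_sum_eq _ _ fun t ht => ?_).symm
      simp only [hX]; rw [dif_pos ⟨ht, hk⟩]
    rw [this, ← row_norm_P (emb m n ⟨k, hk⟩)]
    exact sum_sq_comp_le _ hembinj _
  have hYsum : ∀ k, k < (min m n) → ∑ l ∈ range (min m n), Y l k ≤ 1 := by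
    intro k hk
    have : ∑ l ∈ range (min m n), Y l k
        = ∑ l : Fin (min m n), (Q (enb m n ⟨k, hk⟩) (enb m n (π l)))^2 := by
      refine (fin_sum_eq _ _ fun t ht => ?_).symm
      simp only [hY]; rw [dif_pos ⟨ht, hk⟩]
    rw [this, ← row_norm_Q (enb m n ⟨k, hk⟩)]
    exact sum_sq_comp_le _ henbinj _
  have hCsum : ∀ j, j < (min m n) → ∑ l ∈ range (min m n), |∑ k ∈ range (j+1), eh l k| ≤ ((j+1 : ℕ) : ℝ) := by
    intro j hj
    calc ∑ l ∈ range (min m n), |∑ k ∈ range (j+1), eh l k|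
        ≤ ∑ l ∈ range (min m n), ∑ k ∈ range (j+1), (X l k + Y l k)/2 := by
          refine Finset.sum_le_sum fun l hl => ?_
          refine (Finset.abs_sum_le_sum_abs _ _).trans (Finset.sum_le_sum fun k hk => ?_)
          have hlp : l < (min m n) := Finset.mem_range.1 hl
          have hkp : k < (min m n) := by have := Finset.mem_range.1 hk; omega
          simp only [heh, hX, hY]
          rw [dif_pos ⟨hlp, hkp⟩, dif_pos ⟨hlp, hkp⟩, dif_pos ⟨hlp, hkp⟩, abs_mul]
          set a := P (emb m n ⟨k, hkp⟩) (emb m n (π ⟨l, hlp⟩))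
          set b := Q (enb m n ⟨k, hkp⟩) (enb m n (π ⟨l, hlp⟩))
          nlinarith [sq_nonneg (|a| - |b|), sq_abs a, sq_abs b, abs_nonneg a, abs_nonneg b]
      _ = ∑ k ∈ range (j+1), ∑ l ∈ range (min m n), (X l k + Y l k)/2 := Finset.sum_comm
      _ ≤ ∑ _k ∈ range (j+1), (1:ℝ) := by
          refine Finset.sum_le_sum fun k hk => ?_
          have hkp : k < (min m n) := by have := Finset.mem_range.1 hk; omega
          have : ∑ l ∈ range (min m n), (X l k + Y l k)/2
              = ((∑ l ∈ range (min m n), X l k) + ∑ l ∈ range (min m n), Y l k)/2 := by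
            rw [← Finset.sum_add_distrib, Finset.sum_div]
          rw [this]
          linarith [hXsum k hkp, hYsum k hkp]
      _ = ((j+1 : ℕ) : ℝ) := by simp
  have main := core_ineq (min m n) τh σh eh
    (fun l => by by_cases h : l < (min m n)
                 · simp only [hτh]; rw [dif_pos h]; exact hτ0 _
                 · simp only [hτh]; rw [dif_neg h])
    (fun k l hkl => by
      simp only [hτh]
      by_cases hk : k < (min m n)
      · rw [dif_pos hk]
        by_cases hl : l < (min m n)
        · rw [dif_pos hl]; exact hτm ⟨k, hk⟩ ⟨l, hl⟩ hkl
        · rw [dif_neg hl]; exact hτ0 _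
      · rw [dif_neg hk, dif_neg (by omega)])
    (fun k l hkl => by
      simp only [hσh]
      by_cases hk : k < (min m n)
      · rw [dif_pos hk]
        by_cases hl : l < (min m n)
        · rw [dif_pos hl]; exact hσm ⟨k, hk⟩ ⟨l, hl⟩ hkl
        · rw [dif_neg hl]; exact hσ0 _
      · rw [dif_neg hk, dif_neg (by omega)])
    (by simp only [hσh]; rw [dif_neg (lt_irrefl (min m n))])
    hC1 hCsum
  -- convert goal
  have hgoalL : ∑ k : Fin (min m n), (P * diagMN m n σs * Qᵀ) (emb m n k) (enb m n k) * σz k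
      = ∑ k ∈ range (min m n), (∑ l ∈ range (min m n), τh l * eh l k) * σh k := by
    refine fin_sum_eq _ _ fun t ht => ?_
    rw [hA ⟨t, ht⟩]
    simp only [hσh]
    rw [dif_pos ht]
  have hgoalR : ∑ k : Fin (min m n), σs (π k) * σz k = ∑ k ∈ range (min m n), τh k * σh k := by
    refine fin_sum_eq _ _ fun t ht => ?_
    simp only [hτh, hσh]
    rw [dif_pos ht, dif_pos ht]
  rw [hgoalL, hgoalR]
  exact main

lemma frobSq_sub_expand {m n : ℕ} (A B : Matrix (Fin m) (Fin n) ℝ) :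
    frobSq (A - B) = frobSq A - 2 * (∑ i, ∑ j, A i j * B i j) + frobSq B := by
  unfold frobSq
  have h1 : ∀ i : Fin m, ∑ j : Fin n, ((A - B) i j)^2
      = (∑ j, (A i j)^2) - 2 * (∑ j, A i j * B i j) + ∑ j, (B i j)^2 := by
    intro i
    rw [Finset.mul_sum, ← Finset.sum_sub_distrib, ← Finset.sum_add_distrib]
    refine Finset.sum_congr rfl fun j _ => ?_
    simp only [Matrix.sub_apply]
    ring
  rw [Finset.sum_congr rfl fun i _ => h1 i]
  rw [Finset.sum_add_distrib, Finset.sum_sub_distrib, Finset.mul_sum]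

lemma frobNorm_eq {m n : ℕ} (A : Matrix (Fin m) (Fin n) ℝ) :
    frobNorm A = Real.sqrt (frobSq A) := rfl

lemma euclid_norm_sub {p : ℕ} (x y : EuclideanSpace ℝ (Fin p)) :
    ‖x - y‖ = Real.sqrt (∑ i, (x i - y i)^2) := by
  rw [EuclideanSpace.norm_eq]
  congr 1
  refine Finset.sum_congr rfl fun i _ => ?_
  simp [sq_abs]

lemma diagMN_sub {m n : ℕ} (a b : Fin (min m n) → ℝ) :
    diagMN m n a - diagMN m n b = diagMN m n (fun k => a k - b k) := by
  ext i j
  simp only [Matrix.sub_apply]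
  unfold diagMN
  by_cases h : (i:ℕ) = (j:ℕ) ∧ (i:ℕ) < min m n
  · rw [dif_pos h, dif_pos h, dif_pos h]
  · rw [dif_neg h, dif_neg h, dif_neg h]; ring

theorem stmt_15
    (m n s : ℕ) (hm : 0 < m) (hn : 0 < n)
    (K : Set (EuclideanSpace ℝ (Fin (min m n))))
    (hKconv : Convex ℝ K) (hKcomp : IsCompact K)
    (hKpos : ∀ σ ∈ K, ∀ i, 0 ≤ σ i)
    (hKperm : ∀ π : Equiv.Perm (Fin (min m n)), ∀ σ ∈ K, WithLp.toLp 2 (fun i => σ (π i)) ∈ K)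
    (xs : Matrix (Fin m) (Fin n) ℝ)
    (Us : Matrix (Fin m) (Fin m) ℝ) (Vs : Matrix (Fin n) (Fin n) ℝ)
    (σs : EuclideanSpace ℝ (Fin (min m n)))
    (hUs : Usᵀ * Us = 1) (hVs : Vsᵀ * Vs = 1)
    (hxsSVD : xs = Us * diagMN m n σs * Vsᵀ)
    (hσsK : σs ∈ K) (hσs_nnz : Set.ncard {i | σs i ≠ 0} ≤ s)
    (z : Matrix (Fin m) (Fin n) ℝ)
    (Uz : Matrix (Fin m) (Fin m) ℝ) (Vz : Matrix (Fin n) (Fin n) ℝ)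
    (σz : EuclideanSpace ℝ (Fin (min m n)))
    (hUz : Uzᵀ * Uz = 1) (hVz : Vzᵀ * Vz = 1)
    (hzSVD : z = Uz * diagMN m n σz * Vzᵀ)
    (hσz_nonneg : ∀ i, 0 ≤ σz i)
    (hσz_sorted : ∀ i j : Fin (min m n), i ≤ j → σz j ≤ σz i)
    (σ' : EuclideanSpace ℝ (Fin (min m n)))
    (hσ'K : σ' ∈ K) (hσ'supp : ∀ j : Fin (min m n), s ≤ (j : ℕ) → σ' j = 0)
    (hσ'min : ∀ τ ∈ K, (∀ j : Fin (min m n), s ≤ (j : ℕ) → τ j = 0) →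
      ‖σ' - σz‖ ≤ ‖τ - σz‖) :
    frobNorm (Uz * diagMN m n σ' * Vzᵀ - z) ≤ frobNorm (xs - z) := by
  classical
  set π : Equiv.Perm (Fin (min m n)) := Tuple.sort (fun i => -σs i) with hπdef
  set τ : EuclideanSpace ℝ (Fin (min m n)) := WithLp.toLp 2 (fun i => σs (π i)) with hτdef
  have hσs0 : ∀ i, 0 ≤ σs i := hKpos σs hσsK
  have hτm : ∀ i j : Fin (min m n), i ≤ j → σs (π j) ≤ σs (π i) := by
    intro i j hij
    have h := Tuple.monotone_sort (fun i => -σs i) hij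
    simpa [hπdef] using h
  have hτK : τ ∈ K := hKperm π σs hσsK
  have hτ0 : ∀ i, 0 ≤ τ i := hKpos τ hτK
  have hτsupp : ∀ j : Fin (min m n), s ≤ (j:ℕ) → τ j = 0 := by
    intro j hsj
    by_contra hne
    have hpos : 0 < τ j := lt_of_le_of_ne (hτ0 j) (Ne.symm hne)
    have hsub : Set.Iic j ⊆ {i : Fin (min m n) | σs (π i) ≠ 0} := by
      intro i hi
      have h2 : τ j ≤ τ i := hτm i j hi
      have : (0:ℝ) < τ i := lt_of_lt_of_le hpos h2
      simpa [hτdef] using ne_of_gt this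
    have hcard : (Set.Iic j).ncard ≤ s := by
      refine le_trans (Set.ncard_le_ncard hsub (Set.toFinite _)) ?_
      have heq : {i : Fin (min m n) | σs (π i) ≠ 0} = π ⁻¹' {i | σs i ≠ 0} := rfl
      rw [heq, ← Equiv.image_symm_eq_preimage,
        Set.ncard_image_of_injective _ π.symm.injective]
      exact hσs_nnz
    rw [← Finset.coe_Iic, Set.ncard_coe_finset, Fin.card_Iic] at hcard
    omega
  have h1 : ‖σ' - σz‖ ≤ ‖τ - σz‖ := hσ'min τ hτK hτsupp
  -- LHS equals the Euclidean distance of singular value vectors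
  have hUzUzT : Uz * Uzᵀ = 1 := mul_eq_one_comm.mp hUz
  have hVzVzT : Vz * Vzᵀ = 1 := mul_eq_one_comm.mp hVz
  have hLmat : Uz * diagMN m n σ' * Vzᵀ - z
      = Uz * diagMN m n (fun k => σ' k - σz k) * Vzᵀ := by
    rw [hzSVD, ← Matrix.sub_mul, ← Matrix.mul_sub, diagMN_sub]
  have hLfrob : frobNorm (Uz * diagMN m n σ' * Vzᵀ - z) = ‖σ' - σz‖ := by
    rw [hLmat, frobNorm_eq, Matrix.mul_assoc, frobSq_mul_left _ _ hUz,
      frobSq_mul_right _ _ hVz, frobSq_diagMN, euclid_norm_sub]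
  -- RHS
  set P : Matrix (Fin m) (Fin m) ℝ := Uzᵀ * Us with hPdef
  set Q : Matrix (Fin n) (Fin n) ℝ := Vzᵀ * Vs with hQdef
  have hPt : Pᵀ = Usᵀ * Uz := by
    rw [hPdef, Matrix.transpose_mul, Matrix.transpose_transpose]
  have hQt : Qᵀ = Vsᵀ * Vz := by
    rw [hQdef, Matrix.transpose_mul, Matrix.transpose_transpose]
  have hPtP : Pᵀ * P = 1 := by
    rw [hPt, hPdef, Matrix.mul_assoc, ← Matrix.mul_assoc Uz Uzᵀ Us, hUzUzT,
      Matrix.one_mul, hUs]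
  have hPPt : P * Pᵀ = 1 := mul_eq_one_comm.mp hPtP
  have hQtQ : Qᵀ * Q = 1 := by
    rw [hQt, hQdef, Matrix.mul_assoc, ← Matrix.mul_assoc Vz Vzᵀ Vs, hVzVzT,
      Matrix.one_mul, hVs]
  have hQQt : Q * Qᵀ = 1 := mul_eq_one_comm.mp hQtQ
  have hAmat : xs - z = Uz * (P * diagMN m n σs * Qᵀ - diagMN m n σz) * Vzᵀ := by
    rw [Matrix.mul_sub, Matrix.sub_mul, ← hzSVD, hxsSVD]
    congr 1
    rw [hQt, hPdef]
    simp only [← Matrix.mul_assoc]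
    rw [show Uz * Uzᵀ * Us * diagMN m n σs * Vsᵀ * Vz * Vzᵀ
        = (Uz * Uzᵀ) * (Us * diagMN m n σs * Vsᵀ) * (Vz * Vzᵀ) by
      simp only [Matrix.mul_assoc], hUzUzT, hVzVzT, Matrix.one_mul, Matrix.mul_one]
  have hRfrob : frobNorm (xs - z)
      = Real.sqrt (frobSq (P * diagMN m n σs * Qᵀ - diagMN m n σz)) := by
    rw [frobNorm_eq, hAmat, Matrix.mul_assoc, frobSq_mul_left _ _ hUz,
      frobSq_mul_right _ _ hVz]
  have hfrobA : frobSq (P * diagMN m n σs * Qᵀ) = ∑ k, (σs (π k))^2 := by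
    rw [Matrix.mul_assoc, frobSq_mul_left _ _ hPtP, frobSq_mul_right _ _ hQtQ,
      frobSq_diagMN]
    exact (Equiv.sum_comp π (fun k => (σs k)^2)).symm
  have htrace := trace_ineq P Q hPtP hPPt hQtQ hQQt σs π hσs0 hτm σz hσz_nonneg hσz_sorted
  have hexp := frobSq_sub_expand (P * diagMN m n σs * Qᵀ) (diagMN m n σz)
  rw [sum_mul_diag] at hexp
  have hsq : ∑ k, (σs (π k) - σz k)^2
      ≤ frobSq (P * diagMN m n σs * Qᵀ - diagMN m n σz) := by
    rw [hexp, hfrobA, frobSq_diagMN]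
    have expand : ∑ k : Fin (min m n), (σs (π k) - σz k)^2
        = ∑ k, (σs (π k))^2 - 2*∑ k, σs (π k) * σz k + ∑ k, (σz k)^2 := by
      rw [Finset.mul_sum, ← Finset.sum_sub_distrib, ← Finset.sum_add_distrib]
      exact Finset.sum_congr rfl fun k _ => by ring
    rw [expand]
    linarith [htrace]
  have hτnorm : ‖τ - σz‖ = Real.sqrt (∑ k, (σs (π k) - σz k)^2) := by
    rw [euclid_norm_sub]
  calc frobNorm (Uz * diagMN m n σ' * Vzᵀ - z) = ‖σ' - σz‖ := hLfrob
    _ ≤ ‖τ - σz‖ := h1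
    _ = Real.sqrt (∑ k, (σs (π k) - σz k)^2) := hτnorm
    _ ≤ Real.sqrt (frobSq (P * diagMN m n σs * Qᵀ - diagMN m n σz)) :=
        Real.sqrt_le_sqrt hsq
    _ = frobNorm (xs - z) := hRfrob.symm
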